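/- The only positive semidefinite matrix in the subspace 𝒲 is the zero matrix: if W ∈ 𝒲 is positive semidefinite, then W = 0. -/

import Mathlib

open Matrix

/-- The general element of the subspace 𝒲 of 6×6 real symmetric matrices. -/
def Wmat (w : Fin 6 → ℝ) : Matrix (Fin 6) (Fin 6) ℝ :=
  !![0, 0, 0, w 0, w 1, w 2;
     0, -2 * w 0, -w 1, 0, w 3, w 4;
     0, -w 1, -2 * w 2, -w 3, -w 4, 0;
     w 0, 0, -w 3, 0, 0, w 5;
     w 1, w 3, -w 4, 0, -2 * w 5, 0;
     w 2, w 4, 0, w 5, 0, 0]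

/-- The only positive semidefinite matrix in the subspace 𝒲 is the zero
matrix. -/
theorem posSemidef_mem_W_eq_zero (w : Fin 6 → ℝ)
    (h : (Wmat w).PosSemidef) : Wmat w = 0 := by
  have hQ := h.dotProduct_mulVec_nonneg
  have h1 := hQ ![1,0,0,1,0,0]
  have h2 := hQ ![1,0,0,-1,0,0]
  have h3 := hQ ![1,0,0,0,0,1]
  have h4 := hQ ![1,0,0,0,0,-1]
  have h5 := hQ ![0,0,0,1,0,1]
  have h6 := hQ ![0,0,0,1,0,-1]
  have h7 := hQ ![1,0,0,0,1,0]
  have h8 := hQ ![1,0,0,0,-1,0]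
  have h9 := hQ ![0,1,0,0,1,0]
  have h10 := hQ ![0,1,0,0,-1,0]
  have h11 := hQ ![0,1,0,0,0,1]
  have h12 := hQ ![0,1,0,0,0,-1]
  simp [Wmat, dotProduct, mulVec, Fin.sum_univ_succ] at h1 h2 h3 h4 h5 h6 h7 h8 h9 h10 h11 h12
  have e0 : w 0 = 0 := by linarith
  have e2 : w 2 = 0 := by linarith
  have e5 : w 5 = 0 := by linarith
  have e1 : w 1 = 0 := by linarith
  have e3 : w 3 = 0 := by linarith
  have e4 : w 4 = 0 := by linarith
  ext i j
  fin_cases i <;> fin_cases j <;> simp [Wmat, e0, e1, e2, e3, e4, e5] <;> rfl
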